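/- Let H, R be finite-dimensional complex Hilbert spaces, B = ℂ², and |ψ⟩ a unit vector in H⊗B⊗R. If there exists a matrix M on B⊗R⊗ℂ⁴ with 0 ≤ M ≤ I such that |Tr[M(ρ̄₀ − ρ̄₁)]| = δ > 0, where (ρ̄₀, ρ̄₁) is the candidate EFI pair built from |ψ⟩, then there exists a (1, δ/12)-superdense decoder against |ψ⟩. -/

import Mathlib

open Matrix BigOperators
open scoped ComplexOrder

noncomputable section

namespace BHRD

/-- A (qu)bit index. -/
abbrev Bit := ZMod 2

/-- The Pauli `X` matrix. -/
def Xm : Matrix Bit Bit ℂ := Matrix.of fun i j => if i = j + 1 then 1 else 0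

/-- The Pauli `Z` matrix. -/
def Zm : Matrix Bit Bit ℂ := Matrix.of fun i j => if i = j then (if j = 1 then -1 else 1) else 0

/-- The Pauli mask `X^x Z^z`. -/
def pauli (x z : Bit) : Matrix Bit Bit ℂ := Xm ^ x.val * Zm ^ z.val

/-- The EPR vector `(|00⟩+|11⟩)/√2`. -/
def epr : Bit × Bit → ℂ := fun p => if p.1 = p.2 then (((Real.sqrt 2 : ℝ) : ℂ))⁻¹ else 0

variable {dH dR : ℕ}

/-- The reduced density matrix of `|ψ⟩ ∈ H ⊗ B ⊗ R` on `B ⊗ R`, i.e. `Tr_H |ψ⟩⟨ψ|`. -/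
def rhoBR (ψ : Fin dH × Bit × Fin dR → ℂ) :
    Matrix (Bit × Fin dR) (Bit × Fin dR) ℂ :=
  Matrix.of fun p q => ∑ h : Fin dH, ψ (h, p) * (starRingEnd ℂ) (ψ (h, q))

/-- `(X^x Z^z) ⊗ I_R` acting on `B ⊗ R`. -/
def maskB (dR : ℕ) (x z : Bit) : Matrix (Bit × Fin dR) (Bit × Fin dR) ℂ :=
  Matrix.of fun p q => if p.2 = q.2 then pauli x z p.1 q.1 else 0

/-- The masked state `ρ^{xz} = (X^x Z^z ⊗ I) Tr_H|ψ⟩⟨ψ| (X^x Z^z ⊗ I)†`. -/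
def rhoXZ (ψ : Fin dH × Bit × Fin dR → ℂ) (x z : Bit) :
    Matrix (Bit × Fin dR) (Bit × Fin dR) ℂ :=
  maskB dR x z * rhoBR ψ * (maskB dR x z)ᴴ

/-- `K` is a family of Kraus operators for a (trace-preserving) quantum channel. -/
def IsKraus {α β : Type*} [Fintype α] [Fintype β] [DecidableEq β] {k : ℕ}
    (K : Fin k → Matrix α β ℂ) : Prop :=
  ∑ i, (K i)ᴴ * K i = 1

/-- Application of the channel with Kraus operators `K` to a state `ρ`. -/
def applyCh {α β : Type*} [Fintype α] [Fintype β] {k : ℕ}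
    (K : Fin k → Matrix α β ℂ) (ρ : Matrix β β ℂ) : Matrix α α ℂ :=
  ∑ i, K i * ρ * (K i)ᴴ

/-- The extension `id_B ⊗ A` of a channel `A : R → D ⊗ F` given by a Kraus operator `K`:
a Kraus operator from `B ⊗ R` to `B ⊗ D ⊗ F`. -/
def extB (K : Matrix (Bit × Bit) (Fin dR) ℂ) :
    Matrix (Bit × Bit × Bit) (Bit × Fin dR) ℂ :=
  Matrix.of fun p q => if p.1 = q.1 then K p.2 q.2 else 0

/-- The projector `I_{B⊗D} ⊗ |0⟩⟨0|_F` on `B ⊗ D ⊗ F`. -/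
def PF0 : Matrix (Bit × Bit × Bit) (Bit × Bit × Bit) ℂ :=
  Matrix.of fun p q =>
    if p.1 = q.1 ∧ p.2.1 = q.2.1 ∧ p.2.2 = 0 ∧ q.2.2 = 0 then 1 else 0

/-- The projector `|epr⟩⟨epr|_{B⊗D} ⊗ |0⟩⟨0|_F` on `B ⊗ D ⊗ F`. -/
def Pepr0 : Matrix (Bit × Bit × Bit) (Bit × Bit × Bit) ℂ :=
  Matrix.of fun p q =>
    (if p.2.2 = 0 ∧ q.2.2 = 0 then 1 else 0) *
      (epr (p.1, p.2.1) * (starRingEnd ℂ) (epr (q.1, q.2.1)))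

/-- `K` is (the Kraus family of) a `(γ,ε)`-radiation decoder against `ψ`. -/
def IsRadDecoder (ψ : Fin dH × Bit × Fin dR → ℂ) (γ ε : ℝ) {k : ℕ}
    (K : Fin k → Matrix (Bit × Bit) (Fin dR) ℂ) : Prop :=
  IsKraus K ∧
  γ ≤ ((PF0 * applyCh (fun i => extB (K i)) (rhoBR ψ)).trace).re ∧
  ((PF0 * applyCh (fun i => extB (K i)) (rhoBR ψ)).trace).re * (1/4 + (3/4) * ε) ≤
    ((Pepr0 * applyCh (fun i => extB (K i)) (rhoBR ψ)).trace).re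

/-- The projector `I_P ⊗ |0⟩⟨0|_F` on `P ⊗ F`. -/
def QF0 : Matrix ((Bit × Bit) × Bit) ((Bit × Bit) × Bit) ℂ :=
  Matrix.of fun p q => if p.1 = q.1 ∧ p.2 = 0 ∧ q.2 = 0 then 1 else 0

/-- The projector `|x,z⟩⟨x,z|_P ⊗ |0⟩⟨0|_F` on `P ⊗ F`. -/
def Qxz0 (x z : Bit) : Matrix ((Bit × Bit) × Bit) ((Bit × Bit) × Bit) ℂ :=
  Matrix.of fun p q => if p = ((x, z), 0) ∧ q = ((x, z), 0) then 1 else 0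

/-- `K` is (the Kraus family of) a `(γ,ε)`-superdense decoder against `ψ`. -/
def IsSupDecoder (ψ : Fin dH × Bit × Fin dR → ℂ) (γ ε : ℝ) {k : ℕ}
    (K : Fin k → Matrix ((Bit × Bit) × Bit) (Bit × Fin dR) ℂ) : Prop :=
  IsKraus K ∧
  γ ≤ (1/4) * ∑ x : Bit, ∑ z : Bit, ((QF0 * applyCh K (rhoXZ ψ x z)).trace).re ∧
  ((1/4) * ∑ x : Bit, ∑ z : Bit, ((QF0 * applyCh K (rhoXZ ψ x z)).trace).re) *
      (1/4 + (3/4) * ε) ≤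
    (1/4) * ∑ x : Bit, ∑ z : Bit, ((Qxz0 x z * applyCh K (rhoXZ ψ x z)).trace).re

end BHRD

namespace BHRD

variable {dH dR : ℕ}

/-- The candidate EFI state `ρ̄₀ = (1/4)·Σ_{x,z} ρ^{xz} ⊗ |x,z⟩⟨x,z|` on `B ⊗ R ⊗ ℂ⁴`. -/
def rbar0 (ψ : Fin dH × Bit × Fin dR → ℂ) :
    Matrix ((Bit × Fin dR) × Bit × Bit) ((Bit × Fin dR) × Bit × Bit) ℂ :=
  (1/4 : ℂ) • ∑ x : Bit, ∑ z : Bit,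
    Matrix.of fun p q =>
      (if p.2 = (x, z) ∧ q.2 = (x, z) then 1 else 0) * rhoXZ ψ x z p.1 q.1

/-- The candidate EFI state `ρ̄₁ = ((1/4)·Σ_{x,z} ρ^{xz}) ⊗ (I₄/4)` on `B ⊗ R ⊗ ℂ⁴`. -/
def rbar1 (ψ : Fin dH × Bit × Fin dR → ℂ) :
    Matrix ((Bit × Fin dR) × Bit × Bit) ((Bit × Fin dR) × Bit × Bit) ℂ :=
  (1/16 : ℂ) • ∑ x : Bit, ∑ z : Bit,
    Matrix.of fun p q =>
      (if p.2 = q.2 then 1 else 0) * rhoXZ ψ x z p.1 q.1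

end BHRD

namespace BHRD


variable {dH dR : ℕ}

lemma sum_bit {M : Type*} [AddCommMonoid M] (f : Bit → M) : ∑ r, f r = f 0 + f 1 := by
  rw [show (Finset.univ : Finset Bit) = {0, 1} from by decide]
  rw [Finset.sum_insert (by decide), Finset.sum_singleton]

lemma bitfacts : ((1:Bit)+1 = 0) ∧ ((0:Bit)+1 = 1) ∧ ((0:Bit) ≠ 1) ∧ ((1:Bit) ≠ 0) := by decide

lemma Xm_ct : Xmᴴ = Xm := by
  ext i j
  rcases (by decide : ∀ b : Bit, b = 0 ∨ b = 1) i with rfl | rfl <;>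
    rcases (by decide : ∀ b : Bit, b = 0 ∨ b = 1) j with rfl | rfl <;>
    simp [Xm, Matrix.conjTranspose_apply, bitfacts.1, bitfacts.2.1, bitfacts.2.2.1, bitfacts.2.2.2]
lemma Zm_ct : Zmᴴ = Zm := by
  ext i j
  rcases (by decide : ∀ b : Bit, b = 0 ∨ b = 1) i with rfl | rfl <;>
    rcases (by decide : ∀ b : Bit, b = 0 ∨ b = 1) j with rfl | rfl <;>
    simp [Zm, Matrix.conjTranspose_apply, bitfacts.1, bitfacts.2.1, bitfacts.2.2.1, bitfacts.2.2.2]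
lemma Xm_mul : Xm * Xm = 1 := by
  ext i j
  rw [Matrix.mul_apply, sum_bit]
  rcases (by decide : ∀ b : Bit, b = 0 ∨ b = 1) i with rfl | rfl <;>
    rcases (by decide : ∀ b : Bit, b = 0 ∨ b = 1) j with rfl | rfl <;>
    simp [Xm, Matrix.one_apply, bitfacts.1, bitfacts.2.1, bitfacts.2.2.1, bitfacts.2.2.2]
lemma Zm_mul : Zm * Zm = 1 := by
  ext i j
  rw [Matrix.mul_apply, sum_bit]
  rcases (by decide : ∀ b : Bit, b = 0 ∨ b = 1) i with rfl | rfl <;>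
    rcases (by decide : ∀ b : Bit, b = 0 ∨ b = 1) j with rfl | rfl <;>
    simp [Zm, Matrix.one_apply, bitfacts.1, bitfacts.2.1, bitfacts.2.2.1, bitfacts.2.2.2]

lemma pauli_unitary (x z : Bit) : (pauli x z)ᴴ * pauli x z = 1 := by
  have hx : x.val = 0 ∨ x.val = 1 := by
    have := x.val_lt; interval_cases h : x.val <;> simp
  have hz : z.val = 0 ∨ z.val = 1 := by
    have := z.val_lt; interval_cases h : z.val <;> simp
  rcases hx with hx | hx <;> rcases hz with hz | hz <;>
    simp only [pauli, hx, hz, pow_zero, pow_one, Matrix.conjTranspose_mul, Xm_ct, Zm_ct,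
      Matrix.conjTranspose_one, Matrix.one_mul, Matrix.mul_one]
  · exact Zm_mul
  · exact Xm_mul
  · rw [show Zm * Xm * (Xm * Zm) = Zm * (Xm * Xm) * Zm from by noncomm_ring, Xm_mul,
      Matrix.mul_one, Zm_mul]

lemma maskB_unitary (x z : Bit) : (maskB dR x z)ᴴ * maskB dR x z = 1 := by
  ext p q
  obtain ⟨p1, p2⟩ := p
  obtain ⟨q1, q2⟩ := q
  have key := congrFun (congrFun (pauli_unitary x z) p1) q1
  rw [Matrix.mul_apply] at key ⊢
  rw [Fintype.sum_prod_type, Finset.sum_comm]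
  simp only [Matrix.conjTranspose_apply, maskB, Matrix.of_apply]
  by_cases h : p2 = q2
  · subst h
    have step : ∀ y : Fin dR, (∑ x1 : Bit,
        star (if y = p2 then pauli x z x1 p1 else 0) * (if y = p2 then pauli x z x1 q1 else 0))
        = if y = p2 then ∑ x1 : Bit, star (pauli x z x1 p1) * pauli x z x1 q1 else 0 :=
      fun y => by by_cases hy : y = p2 <;> simp [hy]
    rw [Finset.sum_congr rfl (fun y _ => step y),
      Finset.sum_ite_eq' Finset.univ p2 (fun _ => ∑ x1 : Bit,
        star (pauli x z x1 p1) * pauli x z x1 q1)]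
    simp only [Finset.mem_univ, if_true]
    simp only [Matrix.conjTranspose_apply] at key
    rw [key]
    by_cases h1 : p1 = q1
    · subst h1; simp [Matrix.one_apply]
    · rw [Matrix.one_apply_ne h1, Matrix.one_apply_ne (by simp [Prod.ext_iff, h1])]
  · rw [Matrix.one_apply_ne (by simp [Prod.ext_iff, h])]
    refine Finset.sum_eq_zero fun x2 _ => Finset.sum_eq_zero fun x1 _ => ?_
    by_cases h1 : x2 = p2 <;> by_cases h2 : x2 = q2 <;> simp_all

lemma trace_rhoBR (ψ : Fin dH × Bit × Fin dR → ℂ)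
    (hψ : ∑ p, Complex.normSq (ψ p) = 1) : (rhoBR ψ).trace = 1 := by
  have : ((∑ p, Complex.normSq (ψ p) : ℝ) : ℂ) = 1 := by rw [hψ]; norm_num
  rw [Matrix.trace]
  calc ∑ p, (rhoBR ψ).diag p
      = ∑ p, ∑ h, (Complex.normSq (ψ (h, p)) : ℂ) := by
        refine Finset.sum_congr rfl fun p _ => ?_
        simp only [Matrix.diag_apply, rhoBR, Matrix.of_apply]
        exact Finset.sum_congr rfl fun h _ => Complex.mul_conj _
    _ = ∑ h, ∑ p, (Complex.normSq (ψ (h, p)) : ℂ) := Finset.sum_comm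
    _ = ∑ q : Fin dH × Bit × Fin dR, (Complex.normSq (ψ q) : ℂ) := by
        rw [Fintype.sum_prod_type]
    _ = 1 := by rw [← Complex.ofReal_sum, hψ, Complex.ofReal_one]

lemma trace_rhoXZ (ψ : Fin dH × Bit × Fin dR → ℂ)
    (hψ : ∑ p, Complex.normSq (ψ p) = 1) (x z : Bit) : (rhoXZ ψ x z).trace = 1 := by
  rw [rhoXZ, Matrix.trace_mul_cycle, maskB_unitary, Matrix.one_mul, trace_rhoBR ψ hψ]

def Mblk (M : Matrix ((Bit × Fin dR) × Bit × Bit) ((Bit × Fin dR) × Bit × Bit) ℂ)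
    (c : Bit × Bit) : Matrix (Bit × Fin dR) (Bit × Fin dR) ℂ :=
  M.submatrix (fun p => (p, c)) (fun p => (p, c))

lemma Mblk_psd {M : Matrix ((Bit × Fin dR) × Bit × Bit) ((Bit × Fin dR) × Bit × Bit) ℂ}
    (hM : M.PosSemidef) (c : Bit × Bit) : (Mblk M c).PosSemidef := hM.submatrix _

lemma Mblk_one (c : Bit × Bit) :
    Mblk (1 : Matrix ((Bit × Fin dR) × Bit × Bit) ((Bit × Fin dR) × Bit × Bit) ℂ) c = 1 := by
  ext p q
  simp [Mblk, Matrix.one_apply, Prod.ext_iff]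

lemma Mblk_sub (A B : Matrix ((Bit × Fin dR) × Bit × Bit) ((Bit × Fin dR) × Bit × Bit) ℂ)
    (c : Bit × Bit) : Mblk (A - B) c = Mblk A c - Mblk B c := rfl

lemma psd_smul {n : Type*} [Fintype n] {A : Matrix n n ℂ} (hA : A.PosSemidef) {c : ℝ}
    (hc : 0 ≤ c) : (((c : ℂ)) • A).PosSemidef := hA.smul (Complex.zero_le_real.mpr hc)

def Ebig (M : Matrix ((Bit × Fin dR) × Bit × Bit) ((Bit × Fin dR) × Bit × Bit) ℂ)
    (o : (Bit × Bit) × (Bit × Bit)) : Matrix (Bit × Fin dR) (Bit × Fin dR) ℂ :=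
  if o.2 = o.1 then (((1/4 : ℝ) : ℂ)) • Mblk M o.1 else (((1/12 : ℝ) : ℂ)) • (1 - Mblk M o.1)

lemma Ebig_psd {M : Matrix ((Bit × Fin dR) × Bit × Bit) ((Bit × Fin dR) × Bit × Bit) ℂ}
    (hM : M.PosSemidef) (hM1 : (1 - M).PosSemidef) (o : (Bit × Bit) × (Bit × Bit)) :
    (Ebig M o).PosSemidef := by
  unfold Ebig
  split
  · exact psd_smul (Mblk_psd hM _) (by norm_num)
  · have h : (1 : Matrix (Bit × Fin dR) (Bit × Fin dR) ℂ) - Mblk M o.1 = Mblk (1 - M) o.1 := by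
      rw [Mblk_sub, Mblk_one]
    rw [h]
    exact psd_smul (Mblk_psd hM1 _) (by norm_num)

lemma card4 : (Finset.univ : Finset (Bit × Bit)).card = 4 := by decide

lemma Ebig_sum (M : Matrix ((Bit × Fin dR) × Bit × Bit) ((Bit × Fin dR) × Bit × Bit) ℂ) :
    ∑ o : (Bit × Bit) × (Bit × Bit), Ebig M o = 1 := by
  rw [Fintype.sum_prod_type]
  have inner : ∀ m : Bit × Bit, ∑ g : Bit × Bit, Ebig M (m, g) = (((1/4 : ℝ) : ℂ)) • 1 := by
    intro m
    have step : ∀ g : Bit × Bit, Ebig M (m, g)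
        = (((1/12 : ℝ) : ℂ)) • (1 - Mblk M m) + (if g = m then
            (((1/4 : ℝ) : ℂ)) • Mblk M m - (((1/12 : ℝ) : ℂ)) • (1 - Mblk M m) else 0) := by
      intro g
      unfold Ebig
      by_cases hg : g = m <;> simp [hg]
    rw [Finset.sum_congr rfl fun g _ => step g, Finset.sum_add_distrib, Finset.sum_const,
      Finset.sum_ite_eq' Finset.univ m, card4]
    simp only [Finset.mem_univ, if_true]
    push_cast
    module
  rw [Finset.sum_congr rfl fun m _ => inner m, Finset.sum_const, card4]
  push_cast
  module

def uvec (g : Bit × Bit) : (Bit × Bit) × Bit → ℂ := fun p => if p = (g, 0) then 1 else 0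

def Phi (g : Bit × Bit) : Matrix ((Bit × Bit) × Bit) ((Bit × Bit) × Bit) ℂ :=
  Matrix.of fun p p' => uvec g p * star (uvec g p')

open scoped MatrixOrder in
def Wmat {M : Matrix ((Bit × Fin dR) × Bit × Bit) ((Bit × Fin dR) × Bit × Bit) ℂ}
    (hM : M.PosSemidef) (hM1 : (1 - M).PosSemidef) (o : (Bit × Bit) × (Bit × Bit)) :
    Matrix (Bit × Fin dR) (Bit × Fin dR) ℂ :=
  CFC.sqrt (Ebig M o)

open scoped MatrixOrder in
lemma Wmat_herm {M : Matrix ((Bit × Fin dR) × Bit × Bit) ((Bit × Fin dR) × Bit × Bit) ℂ}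
    (hM : M.PosSemidef) (hM1 : (1 - M).PosSemidef) (o : (Bit × Bit) × (Bit × Bit)) :
    (Wmat hM hM1 o)ᴴ = Wmat hM hM1 o := (CFC.sqrt_nonneg (Ebig M o)).posSemidef.1

open scoped MatrixOrder in
lemma Wmat_sq {M : Matrix ((Bit × Fin dR) × Bit × Bit) ((Bit × Fin dR) × Bit × Bit) ℂ}
    (hM : M.PosSemidef) (hM1 : (1 - M).PosSemidef) (o : (Bit × Bit) × (Bit × Bit)) :
    Wmat hM hM1 o * Wmat hM hM1 o = Ebig M o :=
  CFC.sqrt_mul_sqrt_self _ (Ebig_psd hM hM1 o).nonneg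

def Kop {M : Matrix ((Bit × Fin dR) × Bit × Bit) ((Bit × Fin dR) × Bit × Bit) ℂ}
    (hM : M.PosSemidef) (hM1 : (1 - M).PosSemidef)
    (oi : ((Bit × Bit) × (Bit × Bit)) × (Bit × Fin dR)) :
    Matrix ((Bit × Bit) × Bit) (Bit × Fin dR) ℂ :=
  Matrix.of fun p q => uvec oi.1.2 p * Wmat hM hM1 oi.1 oi.2 q

lemma uvec_norm (g : Bit × Bit) : ∑ p, star (uvec g p) * uvec g p = 1 := by
  simp [uvec, apply_ite (star : ℂ → ℂ), star_one, star_zero, ite_mul, zero_mul, mul_ite,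
    mul_zero, mul_one, Finset.sum_ite_eq']

lemma kraus_sum {M : Matrix ((Bit × Fin dR) × Bit × Bit) ((Bit × Fin dR) × Bit × Bit) ℂ}
    (hM : M.PosSemidef) (hM1 : (1 - M).PosSemidef) :
    ∑ oi : ((Bit × Bit) × (Bit × Bit)) × (Bit × Fin dR),
      (Kop hM hM1 oi)ᴴ * Kop hM hM1 oi = 1 := by
  rw [Fintype.sum_prod_type]
  have h1 : ∀ o : (Bit × Bit) × (Bit × Bit),
      ∑ i : Bit × Fin dR, (Kop hM hM1 (o, i))ᴴ * Kop hM hM1 (o, i) = Ebig M o := by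
    intro o
    ext q q'
    rw [Matrix.sum_apply]
    have step : ∀ i : Bit × Fin dR, ((Kop hM hM1 (o, i))ᴴ * Kop hM hM1 (o, i)) q q'
        = star (Wmat hM hM1 o i q) * Wmat hM hM1 o i q' := by
      intro i
      rw [Matrix.mul_apply]
      have : ∀ p, (Kop hM hM1 (o, i))ᴴ q p * Kop hM hM1 (o, i) p q'
          = (star (uvec o.2 p) * uvec o.2 p) *
            (star (Wmat hM hM1 o i q) * Wmat hM hM1 o i q') := by
        intro p
        simp only [Matrix.conjTranspose_apply, Kop, Matrix.of_apply, star_mul']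
        ring
      rw [Finset.sum_congr rfl fun p _ => this p, ← Finset.sum_mul, uvec_norm, one_mul]
    rw [Finset.sum_congr rfl fun i _ => step i]
    have : ∑ i : Bit × Fin dR, star (Wmat hM hM1 o i q) * Wmat hM hM1 o i q'
        = ((Wmat hM hM1 o)ᴴ * Wmat hM hM1 o) q q' := by
      rw [Matrix.mul_apply]
      exact Finset.sum_congr rfl fun i _ => rfl
    rw [this, Wmat_herm, Wmat_sq]
  rw [Finset.sum_congr rfl fun o _ => h1 o, Ebig_sum]

lemma chan_apply {M : Matrix ((Bit × Fin dR) × Bit × Bit) ((Bit × Fin dR) × Bit × Bit) ℂ}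
    (hM : M.PosSemidef) (hM1 : (1 - M).PosSemidef) (ρ : Matrix (Bit × Fin dR) (Bit × Fin dR) ℂ) :
    ∑ oi : ((Bit × Bit) × (Bit × Bit)) × (Bit × Fin dR),
      Kop hM hM1 oi * ρ * (Kop hM hM1 oi)ᴴ
      = ∑ o : (Bit × Bit) × (Bit × Bit), ((Ebig M o * ρ).trace) • Phi o.2 := by
  rw [Fintype.sum_prod_type]
  refine Finset.sum_congr rfl fun o _ => ?_
  have htr : (Ebig M o * ρ).trace
      = ∑ i : Bit × Fin dR, ∑ q' : Bit × Fin dR,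
          (∑ q : Bit × Fin dR, Wmat hM hM1 o i q * ρ q q') * star (Wmat hM hM1 o i q') := by
    rw [← Wmat_sq hM hM1 o, ← Matrix.trace_mul_cycle (Wmat hM hM1 o) ρ (Wmat hM hM1 o),
      Matrix.trace]
    refine Finset.sum_congr rfl fun i _ => ?_
    rw [Matrix.diag_apply, Matrix.mul_apply]
    refine Finset.sum_congr rfl fun q' _ => ?_
    rw [Matrix.mul_apply]
    congr 1
    exact (Matrix.IsHermitian.apply (Wmat_herm hM hM1 o) q' i).symm
  ext p p'
  rw [Matrix.sum_apply, Matrix.smul_apply]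
  have step : ∀ i : Bit × Fin dR, (Kop hM hM1 (o, i) * ρ * (Kop hM hM1 (o, i))ᴴ) p p'
      = (uvec o.2 p * star (uvec o.2 p')) *
        ∑ q' : Bit × Fin dR, (∑ q : Bit × Fin dR, Wmat hM hM1 o i q * ρ q q')
          * star (Wmat hM hM1 o i q') := by
    intro i
    rw [Matrix.mul_apply, Finset.mul_sum]
    refine Finset.sum_congr rfl fun q' _ => ?_
    rw [Matrix.mul_apply, Matrix.conjTranspose_apply]
    simp only [Kop, Matrix.of_apply, star_mul']
    rw [show (∑ x : Bit × Fin dR, uvec o.2 p * Wmat hM hM1 o i x * ρ x q')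
        = uvec o.2 p * ∑ x : Bit × Fin dR, Wmat hM hM1 o i x * ρ x q' from by
      rw [Finset.mul_sum]; exact Finset.sum_congr rfl fun x _ => by ring]
    ring
  rw [Finset.sum_congr rfl fun i _ => step i, ← Finset.mul_sum, htr]
  simp only [Phi, Matrix.of_apply, smul_eq_mul]
  ring

lemma trace_mul_Phi (Q : Matrix ((Bit × Bit) × Bit) ((Bit × Bit) × Bit) ℂ) (g : Bit × Bit) :
    (Q * Phi g).trace = Q (g, 0) (g, 0) := by
  rw [Matrix.trace]
  have step : ∀ p, (Q * Phi g).diag p = if p = (g, 0) then Q p (g, 0) else 0 := by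
    intro p
    rw [Matrix.diag_apply, Matrix.mul_apply]
    have : ∀ p', Q p p' * Phi g p' p
        = if p' = (g, 0) then (if p = (g, 0) then Q p (g, 0) else 0) else 0 := by
      intro p'
      simp only [Phi, Matrix.of_apply, uvec]
      by_cases h1 : p' = (g, 0) <;> by_cases h2 : p = (g, 0) <;> simp [h1, h2]
    rw [Finset.sum_congr rfl fun p' _ => this p', Finset.sum_ite_eq' Finset.univ]
    simp
  rw [Finset.sum_congr rfl fun p _ => step p, Finset.sum_ite_eq' Finset.univ]
  simp

lemma QF0_diag (g : Bit × Bit) : QF0 (g, 0) (g, 0) = 1 := by simp [QF0]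

lemma Qxz0_diag (x z : Bit) (g : Bit × Bit) :
    Qxz0 x z (g, 0) (g, 0) = if g = (x, z) then 1 else 0 := by
  by_cases h : g = (x, z)
  · simp [Qxz0, h]
  · simp [Qxz0, h]

/-- trace against a corner block -/
lemma trace_mul_corner (M : Matrix ((Bit × Fin dR) × Bit × Bit) ((Bit × Fin dR) × Bit × Bit) ℂ)
    (ρ : Matrix (Bit × Fin dR) (Bit × Fin dR) ℂ) (c : Bit × Bit) :
    (M * Matrix.of (fun p q : (Bit × Fin dR) × Bit × Bit =>
        (if p.2 = c ∧ q.2 = c then (1 : ℂ) else 0) * ρ p.1 q.1)).trace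
      = (Mblk M c * ρ).trace := by
  rw [Matrix.trace, Matrix.trace, Fintype.sum_prod_type]
  have step : ∀ (p1 : Bit × Fin dR) (a : Bit × Bit),
      (M * Matrix.of (fun p q : (Bit × Fin dR) × Bit × Bit =>
        (if p.2 = c ∧ q.2 = c then (1 : ℂ) else 0) * ρ p.1 q.1)).diag (p1, a)
      = if a = c then ∑ q1 : Bit × Fin dR, M (p1, c) (q1, c) * ρ q1 p1 else 0 := by
    intro p1 a
    rw [Matrix.diag_apply, Matrix.mul_apply, Fintype.sum_prod_type]
    simp only [Matrix.of_apply]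
    have inner : ∀ q1 : Bit × Fin dR, ∀ b : Bit × Bit,
        M (p1, a) (q1, b) * ((if b = c ∧ a = c then (1 : ℂ) else 0) * ρ q1 p1)
        = if b = c then (if a = c then M (p1, a) (q1, c) * ρ q1 p1 else 0) else 0 := by
      intro q1 b
      by_cases hb : b = c <;> by_cases ha : a = c <;> simp [hb, ha]
    rw [Finset.sum_congr rfl fun q1 _ => Finset.sum_congr rfl fun b _ => inner q1 b]
    by_cases ha : a = c
    · subst ha
      simp only [if_true]
      refine Finset.sum_congr rfl fun q1 _ => ?_
      simp
    · simp [ha]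
  rw [Finset.sum_congr rfl fun p1 _ => Finset.sum_congr rfl fun a _ => step p1 a]
  refine Finset.sum_congr rfl fun p1 _ => ?_
  rw [Finset.sum_ite_eq' Finset.univ c]
  simp only [Finset.mem_univ, if_true]
  rw [Matrix.diag_apply, Matrix.mul_apply]
  rfl

/-- trace against block-diagonal -/
lemma trace_mul_diagblocks
    (M : Matrix ((Bit × Fin dR) × Bit × Bit) ((Bit × Fin dR) × Bit × Bit) ℂ)
    (ρ : Matrix (Bit × Fin dR) (Bit × Fin dR) ℂ) :
    (M * Matrix.of (fun p q : (Bit × Fin dR) × Bit × Bit =>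
        (if p.2 = q.2 then (1 : ℂ) else 0) * ρ p.1 q.1)).trace
      = ∑ c : Bit × Bit, (Mblk M c * ρ).trace := by
  rw [Matrix.trace, Fintype.sum_prod_type]
  have step : ∀ (p1 : Bit × Fin dR) (a : Bit × Bit),
      (M * Matrix.of (fun p q : (Bit × Fin dR) × Bit × Bit =>
        (if p.2 = q.2 then (1 : ℂ) else 0) * ρ p.1 q.1)).diag (p1, a)
      = ∑ q1 : Bit × Fin dR, M (p1, a) (q1, a) * ρ q1 p1 := by
    intro p1 a
    rw [Matrix.diag_apply, Matrix.mul_apply, Fintype.sum_prod_type]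
    simp only [Matrix.of_apply]
    have inner : ∀ q1 : Bit × Fin dR, ∀ b : Bit × Bit,
        M (p1, a) (q1, b) * ((if b = a then (1 : ℂ) else 0) * ρ q1 p1)
        = if b = a then M (p1, a) (q1, b) * ρ q1 p1 else 0 := by
      intro q1 b
      by_cases hb : b = a <;> simp [hb]
    rw [Finset.sum_congr rfl fun q1 _ => Finset.sum_congr rfl fun b _ => inner q1 b]
    refine Finset.sum_congr rfl fun q1 _ => ?_
    rw [Finset.sum_ite_eq' Finset.univ a]
    simp
  rw [Finset.sum_congr rfl fun p1 _ => Finset.sum_congr rfl fun a _ => step p1 a,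
    Finset.sum_comm]
  refine Finset.sum_congr rfl fun a _ => ?_
  rw [Matrix.trace]
  refine Finset.sum_congr rfl fun p1 _ => ?_
  rw [Matrix.diag_apply, Matrix.mul_apply]
  rfl

lemma trace_M_rbar0 (M : Matrix ((Bit × Fin dR) × Bit × Bit) ((Bit × Fin dR) × Bit × Bit) ℂ)
    (ψ : Fin dH × Bit × Fin dR → ℂ) :
    (M * rbar0 ψ).trace
      = (1/4 : ℂ) * ∑ x : Bit, ∑ z : Bit, (Mblk M (x, z) * rhoXZ ψ x z).trace := by
  rw [rbar0, Matrix.mul_smul, Matrix.trace_smul, smul_eq_mul]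
  congr 1
  rw [Matrix.mul_sum, Matrix.trace_sum]
  refine Finset.sum_congr rfl fun x _ => ?_
  rw [Matrix.mul_sum, Matrix.trace_sum]
  exact Finset.sum_congr rfl fun z _ => trace_mul_corner M (rhoXZ ψ x z) (x, z)

lemma trace_M_rbar1 (M : Matrix ((Bit × Fin dR) × Bit × Bit) ((Bit × Fin dR) × Bit × Bit) ℂ)
    (ψ : Fin dH × Bit × Fin dR → ℂ) :
    (M * rbar1 ψ).trace
      = (1/16 : ℂ) * ∑ x : Bit, ∑ z : Bit, ∑ c : Bit × Bit,
          (Mblk M c * rhoXZ ψ x z).trace := by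
  rw [rbar1, Matrix.mul_smul, Matrix.trace_smul, smul_eq_mul]
  congr 1
  rw [Matrix.mul_sum, Matrix.trace_sum]
  refine Finset.sum_congr rfl fun x _ => ?_
  rw [Matrix.mul_sum, Matrix.trace_sum]
  exact Finset.sum_congr rfl fun z _ => trace_mul_diagblocks M (rhoXZ ψ x z)

lemma trace_rbar0 (ψ : Fin dH × Bit × Fin dR → ℂ)
    (hψ : ∑ p, Complex.normSq (ψ p) = 1) : (rbar0 ψ).trace = 1 := by
  have h := trace_M_rbar0 (1 : Matrix ((Bit × Fin dR) × Bit × Bit) _ ℂ) ψ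
  rw [Matrix.one_mul] at h
  rw [h]
  have : ∀ x z : Bit, (Mblk (1 : Matrix ((Bit × Fin dR) × Bit × Bit) _ ℂ) (x, z)
      * rhoXZ ψ x z).trace = 1 := by
    intro x z
    rw [Mblk_one, Matrix.one_mul, trace_rhoXZ ψ hψ]
  rw [Finset.sum_congr rfl fun x _ => Finset.sum_congr rfl fun z _ => this x z]
  norm_num

lemma trace_rbar1 (ψ : Fin dH × Bit × Fin dR → ℂ)
    (hψ : ∑ p, Complex.normSq (ψ p) = 1) : (rbar1 ψ).trace = 1 := by
  have h := trace_M_rbar1 (1 : Matrix ((Bit × Fin dR) × Bit × Bit) _ ℂ) ψ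
  rw [Matrix.one_mul] at h
  rw [h]
  have : ∀ x z : Bit, ∑ c : Bit × Bit, (Mblk (1 : Matrix ((Bit × Fin dR) × Bit × Bit) _ ℂ) c
      * rhoXZ ψ x z).trace = 4 := by
    intro x z
    have : ∀ c : Bit × Bit, (Mblk (1 : Matrix ((Bit × Fin dR) × Bit × Bit) _ ℂ) c
        * rhoXZ ψ x z).trace = 1 := by
      intro c
      rw [Mblk_one, Matrix.one_mul, trace_rhoXZ ψ hψ]
    rw [Finset.sum_congr rfl fun c _ => this c, Finset.sum_const, card4]
    norm_num
  rw [Finset.sum_congr rfl fun x _ => Finset.sum_congr rfl fun z _ => this x z]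
  norm_num

lemma card2 : (Finset.univ : Finset Bit).card = 2 := by decide

lemma main {dH dR : ℕ} (ψ : Fin dH × Bit × Fin dR → ℂ)
    (hψ : ∑ p, Complex.normSq (ψ p) = 1)
    (δ : ℝ) (hδ : 0 < δ)
    (M : Matrix ((Bit × Fin dR) × Bit × Bit) ((Bit × Fin dR) × Bit × Bit) ℂ)
    (hM : M.PosSemidef) (hM1 : (1 - M).PosSemidef)
    (ht : ((M * (rbar0 ψ - rbar1 ψ)).trace).re = δ) :
    ∃ (k : ℕ) (S : Fin k → Matrix ((Bit × Bit) × Bit) (Bit × Fin dR) ℂ),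
      IsSupDecoder ψ 1 (δ / 12) S := by
  classical
  let e := Fintype.equivFin (((Bit × Bit) × (Bit × Bit)) × (Bit × Fin dR))
  set S : Fin (Fintype.card (((Bit × Bit) × (Bit × Bit)) × (Bit × Fin dR))) →
      Matrix ((Bit × Bit) × Bit) (Bit × Fin dR) ℂ := fun j => Kop hM hM1 (e.symm j) with hS
  have hch : ∀ ρ : Matrix (Bit × Fin dR) (Bit × Fin dR) ℂ, applyCh S ρ
      = ∑ o : (Bit × Bit) × (Bit × Bit), ((Ebig M o * ρ).trace) • Phi o.2 := by
    intro ρ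
    rw [applyCh]
    exact (Equiv.sum_comp e.symm fun oi => Kop hM hM1 oi * ρ * (Kop hM hM1 oi)ᴴ).trans
      (chan_apply hM hM1 ρ)
  have hQtr : ∀ (Q : Matrix ((Bit × Bit) × Bit) ((Bit × Bit) × Bit) ℂ)
      (ρ : Matrix (Bit × Fin dR) (Bit × Fin dR) ℂ),
      (Q * ∑ o : (Bit × Bit) × (Bit × Bit), ((Ebig M o * ρ).trace) • Phi o.2).trace
      = ∑ o : (Bit × Bit) × (Bit × Bit), ((Ebig M o * ρ).trace) * Q (o.2, 0) (o.2, 0) := by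
    intro Q ρ
    rw [Matrix.mul_sum, Matrix.trace_sum]
    refine Finset.sum_congr rfl fun o _ => ?_
    rw [Matrix.mul_smul, Matrix.trace_smul, trace_mul_Phi, smul_eq_mul]
  have hg : ∀ x z : Bit, (QF0 * applyCh S (rhoXZ ψ x z)).trace = 1 := by
    intro x z
    rw [hch, hQtr]
    have h1 : ∀ o : (Bit × Bit) × (Bit × Bit),
        ((Ebig M o * rhoXZ ψ x z).trace) * QF0 (o.2, 0) (o.2, 0)
        = (Ebig M o * rhoXZ ψ x z).trace := fun o => by rw [QF0_diag, mul_one]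
    rw [Finset.sum_congr rfl fun o _ => h1 o]
    have h2 : ∑ o : (Bit × Bit) × (Bit × Bit), (Ebig M o * rhoXZ ψ x z).trace
        = ((∑ o : (Bit × Bit) × (Bit × Bit), Ebig M o) * rhoXZ ψ x z).trace := by
      rw [Matrix.sum_mul, Matrix.trace_sum]
    rw [h2, Ebig_sum, Matrix.one_mul, trace_rhoXZ ψ hψ]
  have hqxz : ∀ x z : Bit, (Qxz0 x z * applyCh S (rhoXZ ψ x z)).trace
      = ∑ m : Bit × Bit, (Ebig M (m, (x, z)) * rhoXZ ψ x z).trace := by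
    intro x z
    rw [hch, hQtr, Fintype.sum_prod_type]
    refine Finset.sum_congr rfl fun m _ => ?_
    have h1 : ∀ g : Bit × Bit, ((Ebig M (m, g) * rhoXZ ψ x z).trace) * Qxz0 x z (g, 0) (g, 0)
        = if g = (x, z) then (Ebig M (m, (x, z)) * rhoXZ ψ x z).trace else 0 := by
      intro g
      rw [Qxz0_diag]
      by_cases hgg : g = (x, z) <;> simp [hgg]
    rw [Finset.sum_congr rfl fun g _ => h1 g, Finset.sum_ite_eq' Finset.univ]
    simp
  have hEtr : ∀ (x z : Bit) (m g : Bit × Bit), (Ebig M (m, g) * rhoXZ ψ x z).trace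
      = if g = m then ((1/4 : ℝ) : ℂ) * (Mblk M m * rhoXZ ψ x z).trace
        else ((1/12 : ℝ) : ℂ) * (1 - (Mblk M m * rhoXZ ψ x z).trace) := by
    intro x z m g
    unfold Ebig
    by_cases hgm : g = m
    · simp only [hgm, if_true]
      rw [Matrix.smul_mul, Matrix.trace_smul, smul_eq_mul]
    · rw [if_neg hgm, if_neg hgm, Matrix.smul_mul, Matrix.trace_smul, smul_eq_mul,
        Matrix.sub_mul, Matrix.trace_sub, Matrix.one_mul, trace_rhoXZ ψ hψ]
  have hsum : ∀ x z : Bit, ∑ m : Bit × Bit, (Ebig M (m, (x, z)) * rhoXZ ψ x z).trace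
      = ((1/4 : ℝ) : ℂ) + ((1/3 : ℝ) : ℂ) * (Mblk M (x, z) * rhoXZ ψ x z).trace
        - ((1/12 : ℝ) : ℂ) * ∑ m : Bit × Bit, (Mblk M m * rhoXZ ψ x z).trace := by
    intro x z
    have split : ∀ m : Bit × Bit, (Ebig M (m, (x, z)) * rhoXZ ψ x z).trace
        = ((1/12 : ℝ) : ℂ) * (1 - (Mblk M m * rhoXZ ψ x z).trace)
          + (if (x, z) = m then ((1/4 : ℝ) : ℂ) * (Mblk M m * rhoXZ ψ x z).trace
              - ((1/12 : ℝ) : ℂ) * (1 - (Mblk M m * rhoXZ ψ x z).trace) else 0) := by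
      intro m
      rw [hEtr x z m (x, z)]
      by_cases hm : (x, z) = m
      · rw [if_pos hm, if_pos hm]; ring
      · rw [if_neg hm, if_neg hm]; ring
    rw [Finset.sum_congr rfl fun m _ => split m, Finset.sum_add_distrib,
      Finset.sum_ite_eq Finset.univ (x, z)]
    simp only [Finset.mem_univ, if_true]
    rw [← Finset.mul_sum]
    have h4 : ∑ m : Bit × Bit, (1 - (Mblk M m * rhoXZ ψ x z).trace)
        = 4 - ∑ m : Bit × Bit, (Mblk M m * rhoXZ ψ x z).trace := by
      rw [Finset.sum_sub_distrib, Finset.sum_const, card4]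
      norm_num
    rw [h4]
    push_cast
    ring
  have htot : ∑ x : Bit, ∑ z : Bit, (Qxz0 x z * applyCh S (rhoXZ ψ x z)).trace
      = 1 + ((4/3 : ℝ) : ℂ) * (M * (rbar0 ψ - rbar1 ψ)).trace := by
    rw [Finset.sum_congr rfl fun x _ => Finset.sum_congr rfl fun z _ =>
      (hqxz x z).trans (hsum x z)]
    rw [Matrix.mul_sub, Matrix.trace_sub, trace_M_rbar0, trace_M_rbar1]
    simp only [Finset.sum_add_distrib, Finset.sum_sub_distrib, Finset.sum_const, card2,
      ← Finset.mul_sum, nsmul_eq_mul]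
    push_cast
    ring
  have hgre : ∀ x z : Bit, ((QF0 * applyCh S (rhoXZ ψ x z)).trace).re = 1 := by
    intro x z
    rw [hg x z, Complex.one_re]
  have hgsum : (1/4 : ℝ) * ∑ x : Bit, ∑ z : Bit,
      ((QF0 * applyCh S (rhoXZ ψ x z)).trace).re = 1 := by
    rw [Finset.sum_congr rfl fun x _ => Finset.sum_congr rfl fun z _ => hgre x z]
    simp only [Finset.sum_const, card2, nsmul_eq_mul]
    norm_num
  have hqre : ∑ x : Bit, ∑ z : Bit, ((Qxz0 x z * applyCh S (rhoXZ ψ x z)).trace).re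
      = 1 + (4/3) * δ := by
    rw [Finset.sum_congr rfl fun x _ =>
      (Complex.re_sum Finset.univ fun z => (Qxz0 x z * applyCh S (rhoXZ ψ x z)).trace).symm,
      ← Complex.re_sum, htot]
    rw [Complex.add_re, Complex.one_re, Complex.re_ofReal_mul, ht]
  refine ⟨_, S, ?_, ?_, ?_⟩
  · show ∑ j, (S j)ᴴ * S j = 1
    exact (Equiv.sum_comp e.symm fun oi => (Kop hM hM1 oi)ᴴ * Kop hM hM1 oi).trans
      (kraus_sum hM hM1)
  · rw [hgsum]
  · rw [hgsum, hqre]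
    have h16 : δ / 16 ≤ δ / 3 := by linarith
    nlinarith [hδ.le]

/-- a distinguisher with advantage `δ > 0` between the candidate EFI
pair `(ρ̄₀, ρ̄₁)` built from `|ψ⟩` yields a `(1, δ/12)`-superdense decoder against `|ψ⟩`. -/
theorem efi_distinguisher_implies_superdense_decoder
    (dH dR : ℕ) (hdH : 1 ≤ dH) (hdR : 1 ≤ dR)
    (ψ : Fin dH × Bit × Fin dR → ℂ)
    (hψ : ∑ p, Complex.normSq (ψ p) = 1)
    (δ : ℝ) (hδ : 0 < δ)
    (hdist : ∃ M : Matrix ((Bit × Fin dR) × Bit × Bit) ((Bit × Fin dR) × Bit × Bit) ℂ,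
      M.PosSemidef ∧ (1 - M).PosSemidef ∧
      |((M * (rbar0 ψ - rbar1 ψ)).trace).re| = δ) :
    ∃ (k : ℕ) (S : Fin k → Matrix ((Bit × Bit) × Bit) (Bit × Fin dR) ℂ),
      IsSupDecoder ψ 1 (δ / 12) S := by
  obtain ⟨M, hM, hM1, habs⟩ := hdist
  rcases abs_cases (((M * (rbar0 ψ - rbar1 ψ)).trace).re) with ⟨h1, _⟩ | ⟨h1, _⟩
  · exact main ψ hψ δ hδ M hM hM1 (by rw [← habs, h1])
  · refine main ψ hψ δ hδ (1 - M) hM1 (by rwa [sub_sub_cancel]) ?_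
    have hΔ : (rbar0 ψ - rbar1 ψ).trace = 0 := by
      rw [Matrix.trace_sub, trace_rbar0 ψ hψ, trace_rbar1 ψ hψ, sub_self]
    rw [Matrix.sub_mul, Matrix.trace_sub, Matrix.one_mul, Complex.sub_re, hΔ]
    rw [← habs, h1]
    simp

end BHRD
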